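/- Let F be a set functor and Λ a normal relational connector of F. Then for every relation r : X ⇸ Y: (1) for every span of functions p : R → X, q : R → Y with r = q · p°, one has Fq · (Fp)° ≤ Λr; (2) for all functions f : X → O, g : Y → O such that g° · f is the difunctional closure of r, one has Λr ≤ (Fg)° · Ff. -/

import Mathlib

open CategoryTheory Function

universe u

/-- Applicative composition of relations: `relComp s r = s · r`. -/
def relComp {X Y Z : Type u} (s : Y → Z → Prop) (r : X → Y → Prop) : X → Z → Prop :=
  fun x z => ∃ y, r x y ∧ s y z

/-- Converse of a relation. -/
def relConv {X Y : Type u} (r : X → Y → Prop) : Y → X → Prop := fun y x => r x y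

/-- Graph relation of a function. -/
def fgraph {X Y : Type u} (f : X → Y) : X → Y → Prop := fun x y => f x = y

/-- An `F`-relator: a monotone assignment of relations `F X ⇸ F Y` to relations `X ⇸ Y`. -/
structure Relator (F : Type u ⥤ Type u) : Type (u + 1) where
  map : ∀ {X Y : Type u}, (X → Y → Prop) → (F.obj X → F.obj Y → Prop)
  mono : ∀ {X Y : Type u} {r s : X → Y → Prop}, (∀ x y, r x y → s x y) →
    ∀ u v, map r u v → map s u v

/-- `f` is a coalgebra homomorphism from `(X, α)` to `(Y, β)`. -/
def IsCoalgHom (F : Type u ⥤ Type u) {X Y : Type u} (α : X → F.obj X) (β : Y → F.obj Y)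
    (f : X → Y) : Prop :=
  ∀ x, β (f x) = F.map (TypeCat.ofHom f) (α x)

/-- Behavioural equivalence of states. -/
def BehEq (F : Type u ⥤ Type u) {X Y : Type u} (α : X → F.obj X) (β : Y → F.obj Y)
    (x : X) (y : Y) : Prop :=
  ∃ (Z : Type u) (γ : Z → F.obj Z) (f : X → Z) (g : Y → Z),
    IsCoalgHom F α γ f ∧ IsCoalgHom F β γ g ∧ f x = g y

/-- `r` is a `Λ`-simulation from `(X, α)` to `(Y, β)`: `r ≤ β° · Λr · α`. -/
def IsSimulation {F : Type u ⥤ Type u} (Λ : Relator F) {X Y : Type u}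
    (α : X → F.obj X) (β : Y → F.obj Y) (r : X → Y → Prop) : Prop :=
  ∀ x y, r x y → Λ.map r (α x) (β y)

/-- `x` and `y` are `Λ`-similar: related by some `Λ`-simulation. -/
def RelSimilar {F : Type u ⥤ Type u} (Λ : Relator F) {X Y : Type u}
    (α : X → F.obj X) (β : Y → F.obj Y) (x : X) (y : Y) : Prop :=
  ∃ r, IsSimulation Λ α β r ∧ r x y

/-- A relation is difunctional if it is of the form `g° · f` for functions `f`, `g`. -/
def IsDifunctional {X Y : Type u} (r : X → Y → Prop) : Prop :=
  ∃ (Z : Type u) (f : X → Z) (g : Y → Z), ∀ x y, r x y ↔ f x = g y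

/-- `c` is the difunctional closure of `r`: the least difunctional relation containing `r`. -/
def IsDifunClosure {X Y : Type u} (r c : X → Y → Prop) : Prop :=
  IsDifunctional c ∧ (∀ x y, r x y → c x y) ∧
    ∀ d : X → Y → Prop, IsDifunctional d → (∀ x y, r x y → d x y) → ∀ x y, c x y → d x y

/-- `Λ` is a relational connector: `1_{FX} ≤ Λ1_X` and `Λ(g° · r · f) = (Fg)° · Λr · Ff`. -/
def IsRelConnector (F : Type u ⥤ Type u) (Λ : Relator F) : Prop :=
  (∀ (X : Type u) (u : F.obj X), Λ.map (@Eq X) u u) ∧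
  (∀ {X Y A B : Type u} (r : X → Y → Prop) (f : A → X) (g : B → Y)
    (u : F.obj A) (v : F.obj B),
    Λ.map (fun a b => r (f a) (g b)) u v ↔ Λ.map r (F.map (TypeCat.ofHom f) u) (F.map (TypeCat.ofHom g) v))

/-- `Λ` is normal: `Λ1_X = 1_{FX}` for every set `X`. -/
def IsNormal (F : Type u ⥤ Type u) (Λ : Relator F) : Prop :=
  ∀ (X : Type u) (u v : F.obj X), Λ.map (@Eq X) u v ↔ u = v

/-- For a normal relational connector `Λ` of `F` and any relation
`r : X ⇸ Y`: (1) for every span `(p, q)` with `r = q · p°` one has `Fq · (Fp)° ≤ Λr`;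
(2) for all `f : X → O`, `g : Y → O` such that `g° · f` is the difunctional closure
of `r`, one has `Λr ≤ (Fg)° · Ff`. -/
theorem stmt4 (F : Type u ⥤ Type u) (Λ : Relator F)
    (hnorm : IsNormal F Λ) (hconn : IsRelConnector F Λ)
    {X Y : Type u} (r : X → Y → Prop) :
    (∀ (R : Type u) (p : R → X) (q : R → Y),
      (∀ x y, r x y ↔ ∃ w, p w = x ∧ q w = y) →
      ∀ (u : F.obj X) (v : F.obj Y),
        (∃ w : F.obj R, F.map (TypeCat.ofHom p) w = u ∧ F.map (TypeCat.ofHom q) w = v) → Λ.map r u v)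
    ∧
    (∀ (O : Type u) (f : X → O) (g : Y → O),
      IsDifunClosure r (fun x y => f x = g y) →
      ∀ (u : F.obj X) (v : F.obj Y), Λ.map r u v → F.map (TypeCat.ofHom f) u = F.map (TypeCat.ofHom g) v) := by
  constructor
  · rintro R p q hr u v ⟨w, rfl, rfl⟩
    rw [← hconn.2 r p q]
    exact Λ.mono (fun a b hab => (hr _ _).2 ⟨a, rfl, by rw [hab]⟩) w w (hconn.1 R w)
  · intro O f g hcl u v h
    have := Λ.mono (fun x y => hcl.2.1 x y) u v h
    rw [hconn.2 (@Eq O) f g, hnorm] at this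
    exact this
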